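/- arXiv:1112.4413 — 6 statements merged into one kernel-verified Lean document; each statement's English description precedes it below -/
import Mathlib

section
/- Let Ψ be a p×p real matrix, s ≤ p an integer, and for a subset J ⊆ {1,...,p} let C_J = {Δ ∈ ℝ^p : |Δ_{J^c}|_1 ≤ |Δ_J|_1}. Define κ_q(s) = min over |J| ≤ s of min over Δ ∈ C_J with |Δ|_q = 1 of |ΨΔ|_∞. Then for all 1 ≤ q ≤ ∞, κ_q(s) ≥ (2s)^{-1/q} κ_∞(s). -/
open Matrix

/-- κ_q(s) ≥ (2s)^{-1/q} κ_∞(s) (lower-bound formulation). -/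
theorem sensitivity_q_vs_infty {p : ℕ} (Ψ : Matrix (Fin p) (Fin p) ℝ)
    (s : ℕ) (hs : 1 ≤ s) (hsp : s ≤ p) (q : ℝ) (hq : 1 ≤ q) (κ : ℝ)
    (hκ : ∀ J : Finset (Fin p), J.card ≤ s →
      ∀ Δ : Fin p → ℝ,
        (∑ j, if j ∈ J then 0 else |Δ j|) ≤ (∑ j, if j ∈ J then |Δ j| else 0) →
        ‖Δ‖ = 1 → κ ≤ ‖Ψ.mulVec Δ‖) :
    ∀ J : Finset (Fin p), J.card ≤ s →
      ∀ Δ : Fin p → ℝ,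
        (∑ j, if j ∈ J then 0 else |Δ j|) ≤ (∑ j, if j ∈ J then |Δ j| else 0) →
        (∑ j, |Δ j| ^ q) ^ (1 / q) = 1 →
        ((2 * s : ℝ)) ^ (-(1 / q)) * κ ≤ ‖Ψ.mulVec Δ‖ := by
  intro J hJ Δ hcone hq1
  have hq0 : (0:ℝ) < q := lt_of_lt_of_le one_pos hq
  have hs2 : (0:ℝ) < 2 * s := by positivity
  have hΔabs : ∀ j, |Δ j| ≤ ‖Δ‖ := by
    intro j
    have := norm_le_pi_norm Δ j
    simpa [Real.norm_eq_abs] using this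
  have hsumnn : (0:ℝ) ≤ ∑ j, |Δ j| ^ q := by
    apply Finset.sum_nonneg
    intro j _
    exact Real.rpow_nonneg (abs_nonneg _) _
  -- ℓ_q norm condition gives sum = 1
  have hsum1 : ∑ j, |Δ j| ^ q = 1 := by
    have h := congrArg (fun x : ℝ => x ^ q) hq1
    simp only [Real.one_rpow] at h
    rwa [← Real.rpow_mul hsumnn, one_div, inv_mul_cancel₀ (ne_of_gt hq0),
      Real.rpow_one] at h
  set t := ‖Δ‖ with ht_def
  have htnn : 0 ≤ t := norm_nonneg _
  have ht : 0 < t := by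
    rcases eq_or_lt_of_le htnn with h0 | h0
    · exfalso
      have hΔ0 : Δ = 0 := by
        have := norm_eq_zero.mp h0.symm
        exact this
      rw [hΔ0] at hsum1
      simp [Real.zero_rpow (ne_of_gt hq0)] at hsum1
    · exact h0
  -- ℓ1 bound on the cone
  have hsplit : ∑ j, |Δ j| =
      (∑ j, if j ∈ J then |Δ j| else 0) + (∑ j, if j ∈ J then 0 else |Δ j|) := by
    rw [← Finset.sum_add_distrib]
    apply Finset.sum_congr rfl
    intro j _
    by_cases h : j ∈ J <;> simp [h]
  have hJsum : (∑ j, if j ∈ J then |Δ j| else 0) ≤ s * t := by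
    calc (∑ j, if j ∈ J then |Δ j| else 0) = ∑ j ∈ J, |Δ j| := by
          rw [Finset.sum_ite_mem]
          simp
      _ ≤ ∑ _j ∈ J, t := Finset.sum_le_sum fun j _ => hΔabs j
      _ = J.card * t := by simp [mul_comm]
      _ ≤ s * t := by
          apply mul_le_mul_of_nonneg_right _ htnn
          exact_mod_cast hJ
  have hl1 : ∑ j, |Δ j| ≤ 2 * s * t := by
    rw [hsplit]
    calc (∑ j, if j ∈ J then |Δ j| else 0) + (∑ j, if j ∈ J then 0 else |Δ j|)
        ≤ (∑ j, if j ∈ J then |Δ j| else 0) + (∑ j, if j ∈ J then |Δ j| else 0) := by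
          linarith [hcone]
      _ ≤ s * t + s * t := by linarith [hJsum]
      _ = 2 * s * t := by ring
  -- 1 ≤ 2 s t^q
  have hkey : (1:ℝ) ≤ 2 * s * t ^ q := by
    have hterm : ∀ j, |Δ j| ^ q ≤ |Δ j| * t ^ (q - 1) := by
      intro j
      have : |Δ j| ^ q = |Δ j| ^ (1:ℝ) * |Δ j| ^ (q - 1) := by
        rw [← Real.rpow_add' (abs_nonneg _)]
        · ring_nf
        · linarith
      rw [this, Real.rpow_one]
      apply mul_le_mul_of_nonneg_left _ (abs_nonneg _)
      exact Real.rpow_le_rpow (abs_nonneg _) (hΔabs j) (by linarith)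
    calc (1:ℝ) = ∑ j, |Δ j| ^ q := hsum1.symm
      _ ≤ ∑ j, |Δ j| * t ^ (q - 1) := Finset.sum_le_sum fun j _ => hterm j
      _ = (∑ j, |Δ j|) * t ^ (q - 1) := by rw [← Finset.sum_mul]
      _ ≤ (2 * s * t) * t ^ (q - 1) := by
          apply mul_le_mul_of_nonneg_right hl1 (Real.rpow_nonneg htnn _)
      _ = 2 * s * t ^ q := by
          rw [mul_assoc, ← Real.rpow_one_add' htnn (by intro h; linarith [h] : 1 + (q - 1) ≠ 0)]
          ring_nf
  -- t ≥ (2s)^{-1/q}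
  have htb : ((2 * s : ℝ)) ^ (-(1 / q)) ≤ t := by
    have h1 : ((2 * s : ℝ))⁻¹ ≤ t ^ q := by
      rw [inv_le_iff_one_le_mul₀ hs2]
      linarith [hkey]
    have h2 := Real.rpow_le_rpow (by positivity) h1 (le_of_lt (by positivity : (0:ℝ) < 1 / q))
    rwa [← Real.rpow_mul htnn, mul_one_div, div_self (ne_of_gt hq0), Real.rpow_one,
      Real.inv_rpow (le_of_lt hs2), ← Real.rpow_neg (le_of_lt hs2)] at h2
  -- conclude
  rcases le_or_gt κ 0 with hκ0 | hκ0
  · have : ((2 * s : ℝ)) ^ (-(1 / q)) * κ ≤ 0 :=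
      mul_nonpos_of_nonneg_of_nonpos (Real.rpow_nonneg (le_of_lt hs2) _) hκ0
    exact le_trans this (norm_nonneg _)
  · -- apply hκ to t⁻¹ • Δ
    have hcone' : (∑ j, if j ∈ J then 0 else |(t⁻¹ • Δ) j|) ≤
        (∑ j, if j ∈ J then |(t⁻¹ • Δ) j| else 0) := by
      have habs : ∀ j, |(t⁻¹ • Δ) j| = t⁻¹ * |Δ j| := by
        intro j
        simp [Pi.smul_apply, abs_mul, abs_of_pos (inv_pos.mpr ht)]
      simp only [habs]
      calc (∑ j, if j ∈ J then 0 else t⁻¹ * |Δ j|)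
          = t⁻¹ * ∑ j, if j ∈ J then 0 else |Δ j| := by
            rw [Finset.mul_sum]; apply Finset.sum_congr rfl; intro j _
            by_cases h : j ∈ J <;> simp [h]
        _ ≤ t⁻¹ * ∑ j, if j ∈ J then |Δ j| else 0 :=
            mul_le_mul_of_nonneg_left hcone (le_of_lt (inv_pos.mpr ht))
        _ = ∑ j, if j ∈ J then t⁻¹ * |Δ j| else 0 := by
            rw [Finset.mul_sum]; apply Finset.sum_congr rfl; intro j _
            by_cases h : j ∈ J <;> simp [h]
    have hnorm1 : ‖t⁻¹ • Δ‖ = 1 := by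
      rw [norm_smul, Real.norm_eq_abs, abs_of_pos (inv_pos.mpr ht), ← ht_def,
        inv_mul_cancel₀ (ne_of_gt ht)]
    have hmain := hκ J hJ (t⁻¹ • Δ) hcone' hnorm1
    rw [Matrix.mulVec_smul, norm_smul, Real.norm_eq_abs,
      abs_of_pos (inv_pos.mpr ht)] at hmain
    have htκ : t * κ ≤ ‖Ψ.mulVec Δ‖ := by
      have := mul_le_mul_of_nonneg_left hmain (le_of_lt ht)
      rwa [← mul_assoc, mul_inv_cancel₀ (ne_of_gt ht), one_mul] at this
    calc ((2 * s : ℝ)) ^ (-(1 / q)) * κ ≤ t * κ :=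
          mul_le_mul_of_nonneg_right htb (le_of_lt hκ0)
      _ ≤ ‖Ψ.mulVec Δ‖ := htκ
end

section
/- Let ζ and η be real random variables that are γ₁- and γ₂-subgaussian respectively (not necessarily independent), and suppose E[ζη] = 0. Then there exist constants γ > 0 and t₀ > 0 depending only on γ₁, γ₂ such that E[exp(t·ζη)] ≤ exp(γ²t²/2) for all |t| ≤ t₀, i.e., the product ζη is subexponential. -/
open MeasureTheory Real
open scoped ENNReal

/-- Completed-square Gaussian integral. -/
lemma gauss_shift (b x : ℝ) (hb : 0 < b) :
    Integrable (fun s : ℝ => exp (s * x - b * s ^ 2)) ∧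
    ∫ s : ℝ, exp (s * x - b * s ^ 2) = exp (x ^ 2 / (4 * b)) * Real.sqrt (π / b) := by
  have hfun : (fun s : ℝ => exp (s * x - b * s ^ 2))
      = fun s => exp (x ^ 2 / (4 * b)) * exp (-b * (s - x / (2 * b)) ^ 2) := by
    funext s
    rw [← Real.exp_add]
    congr 1
    field_simp
    ring
  rw [hfun]
  constructor
  · exact ((integrable_exp_neg_mul_sq hb).comp_sub_right _).const_mul _
  · rw [integral_const_mul _ _]
    congr 1
    have h := integral_sub_right_eq_self (μ := volume) (fun s : ℝ => exp (-b * s ^ 2)) (x / (2 * b))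
    rw [h, integral_gaussian]

/-- If ζ is γ-subgaussian then exp (c ζ²) is integrable for 2cγ² < 1. -/
lemma integrable_exp_sq {Ω : Type*} [MeasurableSpace Ω] (μ : Measure Ω) [IsProbabilityMeasure μ]
    (ζ : Ω → ℝ) (hζm : Measurable ζ) (γ c : ℝ) (hγ : 0 < γ) (hc : 0 < c)
    (hcγ : 2 * c * γ ^ 2 < 1)
    (hint : ∀ t : ℝ, Integrable (fun ω => exp (t * ζ ω)) μ)
    (hmgf : ∀ t : ℝ, ∫ ω, exp (t * ζ ω) ∂μ ≤ exp (γ ^ 2 * t ^ 2 / 2)) :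
    Integrable (fun ω => exp (c * ζ ω ^ 2)) μ := by
  set b : ℝ := 1 / (4 * c) with hbdef
  have hb0 : 0 < b := by positivity
  have hbγ : 0 < b - γ ^ 2 / 2 := by
    have h1 : γ ^ 2 / 2 < 1 / (4 * c) := by
      rw [div_lt_div_iff₀ (by norm_num) (by positivity)]
      nlinarith
    simpa [hbdef] using sub_pos.mpr h1
  have h4b : ∀ x : ℝ, x ^ 2 / (4 * b) = c * x ^ 2 := by
    intro x
    rw [hbdef]
    field_simp
  have measf : Measurable fun ω => ENNReal.ofReal (exp (c * ζ ω ^ 2)) :=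
    ENNReal.measurable_ofReal.comp
      (Real.measurable_exp.comp (measurable_const.mul (hζm.pow_const 2)))
  have meas1 : Measurable fun p : Ω × ℝ =>
      ENNReal.ofReal (exp (p.2 * ζ p.1 - b * p.2 ^ 2)) := by
    apply ENNReal.measurable_ofReal.comp
    exact Real.measurable_exp.comp
      ((measurable_snd.mul (hζm.comp measurable_fst)).sub
        (measurable_const.mul (measurable_snd.pow_const 2)))
  set C : ℝ≥0∞ := ENNReal.ofReal (Real.sqrt (π / b)) with hCdef
  have hCpos : 0 < Real.sqrt (π / b) := Real.sqrt_pos.mpr (by positivity)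
  have hC0 : C ≠ 0 := by
    simp only [hCdef, ne_eq, ENNReal.ofReal_eq_zero, not_le]
    exact hCpos
  have left : ∀ ω, (∫⁻ s : ℝ, ENNReal.ofReal (exp (s * ζ ω - b * s ^ 2)))
      = C * ENNReal.ofReal (exp (c * ζ ω ^ 2)) := by
    intro ω
    obtain ⟨hi, he⟩ := gauss_shift b (ζ ω) hb0
    rw [← ofReal_integral_eq_lintegral_ofReal hi
      (Filter.Eventually.of_forall fun s => (exp_pos _).le), he, h4b,
      ENNReal.ofReal_mul (exp_pos _).le, mul_comm]
  have right : ∀ s : ℝ, (∫⁻ ω, ENNReal.ofReal (exp (s * ζ ω - b * s ^ 2)) ∂μ)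
      ≤ ENNReal.ofReal (exp (-(b - γ ^ 2 / 2) * s ^ 2)) := by
    intro s
    have hsplit : ∀ ω, exp (s * ζ ω - b * s ^ 2) = exp (-(b * s ^ 2)) * exp (s * ζ ω) := by
      intro ω
      rw [← Real.exp_add]
      ring_nf
    calc (∫⁻ ω, ENNReal.ofReal (exp (s * ζ ω - b * s ^ 2)) ∂μ)
        = ENNReal.ofReal (exp (-(b * s ^ 2))) * ∫⁻ ω, ENNReal.ofReal (exp (s * ζ ω)) ∂μ := by
          simp_rw [hsplit, ENNReal.ofReal_mul (exp_pos _).le]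
          exact lintegral_const_mul _ (ENNReal.measurable_ofReal.comp
            (Real.measurable_exp.comp (measurable_const.mul hζm)))
      _ = ENNReal.ofReal (exp (-(b * s ^ 2))) * ENNReal.ofReal (∫ ω, exp (s * ζ ω) ∂μ) := by
          rw [ofReal_integral_eq_lintegral_ofReal (hint s)
            (Filter.Eventually.of_forall fun ω => (exp_pos _).le)]
      _ ≤ ENNReal.ofReal (exp (-(b * s ^ 2))) * ENNReal.ofReal (exp (γ ^ 2 * s ^ 2 / 2)) :=
          mul_le_mul_right (ENNReal.ofReal_le_ofReal (hmgf s)) _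
      _ = ENNReal.ofReal (exp (-(b - γ ^ 2 / 2) * s ^ 2)) := by
          rw [← ENNReal.ofReal_mul (exp_pos _).le, ← Real.exp_add]
          congr 2
          ring
  have fin : (∫⁻ ω, ENNReal.ofReal (exp (c * ζ ω ^ 2)) ∂μ) < ⊤ := by
    have key : C * ∫⁻ ω, ENNReal.ofReal (exp (c * ζ ω ^ 2)) ∂μ
        ≤ ENNReal.ofReal (∫ s : ℝ, exp (-(b - γ ^ 2 / 2) * s ^ 2)) := by
      calc C * ∫⁻ ω, ENNReal.ofReal (exp (c * ζ ω ^ 2)) ∂μ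
          = ∫⁻ ω, C * ENNReal.ofReal (exp (c * ζ ω ^ 2)) ∂μ :=
            (lintegral_const_mul _ measf).symm
        _ = ∫⁻ ω, (∫⁻ s : ℝ, ENNReal.ofReal (exp (s * ζ ω - b * s ^ 2))) ∂μ :=
            lintegral_congr fun ω => (left ω).symm
        _ = ∫⁻ s : ℝ, ∫⁻ ω, ENNReal.ofReal (exp (s * ζ ω - b * s ^ 2)) ∂μ :=
            lintegral_lintegral_swap meas1.aemeasurable
        _ ≤ ∫⁻ s : ℝ, ENNReal.ofReal (exp (-(b - γ ^ 2 / 2) * s ^ 2)) :=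
            lintegral_mono right
        _ = ENNReal.ofReal (∫ s : ℝ, exp (-(b - γ ^ 2 / 2) * s ^ 2)) :=
            (ofReal_integral_eq_lintegral_ofReal (integrable_exp_neg_mul_sq hbγ)
              (Filter.Eventually.of_forall fun s => (exp_pos _).le)).symm
    have hne : C * (∫⁻ ω, ENNReal.ofReal (exp (c * ζ ω ^ 2)) ∂μ) ≠ ⊤ :=
      (lt_of_le_of_lt key ENNReal.ofReal_lt_top).ne
    exact ENNReal.lt_top_of_mul_ne_top_right hne hC0
  refine ⟨(Real.measurable_exp.comp (measurable_const.mul (hζm.pow_const 2))).aestronglyMeasurable, ?_⟩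
  rw [hasFiniteIntegral_iff_ofReal (Filter.Eventually.of_forall fun ω => (exp_pos _).le)]
  exact fin

/-- Elementary: exp y ≤ 1 + y + y² exp |y|. -/
lemma exp_le_poly (y : ℝ) : exp y ≤ 1 + y + y ^ 2 * exp |y| := by
  rcases le_or_gt |y| 1 with h | h
  · have h1 := Real.abs_exp_sub_one_sub_id_le h
    have h2 : (1 : ℝ) ≤ exp |y| := by
      rw [← Real.exp_zero]
      exact Real.exp_le_exp.mpr (abs_nonneg y)
    have h3 : exp y - 1 - y ≤ y ^ 2 := (abs_le.mp h1).2
    nlinarith [sq_nonneg y]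
  · rcases le_or_gt 0 y with hy | hy
    · rw [abs_of_nonneg hy] at h ⊢
      nlinarith [Real.exp_pos y, mul_nonneg (by nlinarith : (0:ℝ) ≤ y ^ 2 - 1) (Real.exp_pos y).le]
    · rw [abs_of_neg hy] at h ⊢
      have h1 : exp y ≤ 1 := by
        rw [← Real.exp_zero]
        exact Real.exp_le_exp.mpr hy.le
      have h2 : 1 - y ≤ exp (-y) := by
        have := Real.add_one_le_exp (-y)
        linarith
      have h3 : y ^ 2 * (1 - y) ≤ y ^ 2 * exp (-y) :=
        mul_le_mul_of_nonneg_left h2 (sq_nonneg y)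
      nlinarith

/-- Elementary: x² ≤ (4/a²) exp (a|x|) for a > 0. -/
lemma sq_le_exp_abs (a x : ℝ) (ha : 0 < a) : x ^ 2 ≤ 4 / a ^ 2 * exp (a * |x|) := by
  have h1 : 0 ≤ a * |x| / 2 := by positivity
  have h2 := Real.add_one_le_exp (a * |x| / 2)
  have h3 : exp (a * |x|) = exp (a * |x| / 2) * exp (a * |x| / 2) := by
    rw [← Real.exp_add]
    ring_nf
  have h4 : a ^ 2 * x ^ 2 / 4 ≤ exp (a * |x|) := by
    rw [h3]
    nlinarith [sq_abs x]
  have h5 : x ^ 2 = 4 / a ^ 2 * (a ^ 2 * x ^ 2 / 4) := by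
    field_simp
  rw [h5]
  have h6 : (0:ℝ) ≤ 4 / a ^ 2 := by positivity
  exact mul_le_mul_of_nonneg_left h4 h6

/-- the product of two (not necessarily independent) subgaussian
random variables with E[ζη] = 0 is subexponential. -/
theorem product_subgaussian_is_subexponential {Ω : Type*} [MeasurableSpace Ω]
    (μ : Measure Ω) [IsProbabilityMeasure μ]
    (ζ η : Ω → ℝ) (hζm : Measurable ζ) (hηm : Measurable η)
    (γ₁ γ₂ : ℝ) (hγ₁ : 0 < γ₁) (hγ₂ : 0 < γ₂)
    (hζint : ∀ t : ℝ, Integrable (fun ω => exp (t * ζ ω)) μ)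
    (hηint : ∀ t : ℝ, Integrable (fun ω => exp (t * η ω)) μ)
    (hζ : ∀ t : ℝ, ∫ ω, exp (t * ζ ω) ∂μ ≤ exp (γ₁ ^ 2 * t ^ 2 / 2))
    (hη : ∀ t : ℝ, ∫ ω, exp (t * η ω) ∂μ ≤ exp (γ₂ ^ 2 * t ^ 2 / 2))
    (hprodint : Integrable (fun ω => ζ ω * η ω) μ)
    (hzero : ∫ ω, ζ ω * η ω ∂μ = 0) :
    ∃ γ t₀ : ℝ, 0 < γ ∧ 0 < t₀ ∧
      ∀ t : ℝ, |t| ≤ t₀ →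
        Integrable (fun ω => exp (t * (ζ ω * η ω))) μ ∧
        ∫ ω, exp (t * (ζ ω * η ω)) ∂μ ≤ exp (γ ^ 2 * t ^ 2 / 2) := by
  set G : ℝ := max γ₁ γ₂ with hGdef
  have hG : 0 < G := lt_of_lt_of_le hγ₁ (le_max_left _ _)
  set c : ℝ := 1 / (4 * G ^ 2) with hcdef
  have hc : 0 < c := by positivity
  have hcγ₁ : 2 * c * γ₁ ^ 2 < 1 := by
    have h1 : γ₁ ≤ G := le_max_left _ _
    have h2 : γ₁ ^ 2 ≤ G ^ 2 := by nlinarith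
    rw [hcdef, show (2:ℝ) * (1 / (4 * G ^ 2)) * γ₁ ^ 2 = γ₁ ^ 2 / (2 * G ^ 2) from by ring,
      div_lt_one (by positivity)]
    nlinarith
  have hcγ₂ : 2 * c * γ₂ ^ 2 < 1 := by
    have h1 : γ₂ ≤ G := le_max_right _ _
    have h2 : γ₂ ^ 2 ≤ G ^ 2 := by nlinarith
    rw [hcdef, show (2:ℝ) * (1 / (4 * G ^ 2)) * γ₂ ^ 2 = γ₂ ^ 2 / (2 * G ^ 2) from by ring,
      div_lt_one (by positivity)]
    nlinarith
  have hA : Integrable (fun ω => exp (c * ζ ω ^ 2)) μ :=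
    integrable_exp_sq μ ζ hζm γ₁ c hγ₁ hc hcγ₁ hζint hζ
  have hB : Integrable (fun ω => exp (c * η ω ^ 2)) μ :=
    integrable_exp_sq μ η hηm γ₂ c hγ₂ hc hcγ₂ hηint hη
  set D : Ω → ℝ := fun ω => (exp (c * ζ ω ^ 2) + exp (c * η ω ^ 2)) / 2 with hDdef
  have hDint : Integrable D μ := (hA.add hB).div_const 2
  set X : Ω → ℝ := fun ω => ζ ω * η ω with hXdef
  have hXm : Measurable X := hζm.mul hηm
  -- key pointwise domination
  have hdomabs : ∀ ω, ∀ u : ℝ, u ≤ c → exp (u * |X ω|) ≤ D ω := by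
    intro ω u hu
    have h1 : u * |X ω| ≤ c * |X ω| := mul_le_mul_of_nonneg_right hu (abs_nonneg _)
    have h2 : |X ω| ≤ (ζ ω ^ 2 + η ω ^ 2) / 2 := by
      rw [hXdef, abs_mul]
      nlinarith [sq_nonneg (|ζ ω| - |η ω|), sq_abs (ζ ω), sq_abs (η ω)]
    have h3 : c * |X ω| ≤ c * ((ζ ω ^ 2 + η ω ^ 2) / 2) :=
      mul_le_mul_of_nonneg_left h2 hc.le
    have h4 : exp (u * |X ω|) ≤ exp (c * ((ζ ω ^ 2 + η ω ^ 2) / 2)) :=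
      Real.exp_le_exp.mpr (le_trans h1 h3)
    refine le_trans h4 ?_
    have h5 : exp (c * ((ζ ω ^ 2 + η ω ^ 2) / 2))
        = exp (c * ζ ω ^ 2 / 2) * exp (c * η ω ^ 2 / 2) := by
      rw [← Real.exp_add]
      ring_nf
    have h6 : exp (c * ζ ω ^ 2 / 2) * exp (c * ζ ω ^ 2 / 2) = exp (c * ζ ω ^ 2) := by
      rw [← Real.exp_add]
      ring_nf
    have h7 : exp (c * η ω ^ 2 / 2) * exp (c * η ω ^ 2 / 2) = exp (c * η ω ^ 2) := by
      rw [← Real.exp_add]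
      ring_nf
    rw [h5, hDdef]
    nlinarith [sq_nonneg (exp (c * ζ ω ^ 2 / 2) - exp (c * η ω ^ 2 / 2))]
  set a : ℝ := c / 2 with hadef
  have ha : 0 < a := by positivity
  set A : ℝ := ∫ ω, exp (c * ζ ω ^ 2) ∂μ with hAdef
  set B : ℝ := ∫ ω, exp (c * η ω ^ 2) ∂μ with hBdef
  have hA1 : 1 ≤ A := by
    rw [hAdef]
    have := integral_mono (integrable_const (1:ℝ)) hA
      (fun ω => by
        rw [← Real.exp_zero]
        exact Real.exp_le_exp.mpr (by positivity))
    simpa using this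
  have hB1 : 1 ≤ B := by
    rw [hBdef]
    have := integral_mono (integrable_const (1:ℝ)) hB
      (fun ω => by
        rw [← Real.exp_zero]
        exact Real.exp_le_exp.mpr (by positivity))
    simpa using this
  set K : ℝ := 4 / a ^ 2 * ((A + B) / 2) with hKdef
  have hK : 0 < K := by
    rw [hKdef]
    positivity
  refine ⟨Real.sqrt (2 * K), a, Real.sqrt_pos.mpr (by linarith), ha, ?_⟩
  intro t ht
  have htc : |t| ≤ c := le_trans ht (by rw [hadef]; linarith)
  -- integrability
  have hmeas_t : AEStronglyMeasurable (fun ω => exp (t * X ω)) μ :=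
    (Real.measurable_exp.comp (measurable_const.mul hXm)).aestronglyMeasurable
  have hptdom : ∀ ω, exp (t * X ω) ≤ D ω := by
    intro ω
    have h1 : t * X ω ≤ |t| * |X ω| := by
      calc t * X ω ≤ |t * X ω| := le_abs_self _
        _ = |t| * |X ω| := abs_mul _ _
    refine le_trans (Real.exp_le_exp.mpr h1) ?_
    exact hdomabs ω |t| htc
  have hint_t : Integrable (fun ω => exp (t * X ω)) μ := by
    refine Integrable.mono' hDint hmeas_t (Filter.Eventually.of_forall fun ω => ?_)
    rw [Real.norm_eq_abs, abs_of_pos (exp_pos _)]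
    exact hptdom ω
  refine ⟨hint_t, ?_⟩
  -- pointwise second-order bound
  have hptwise : ∀ ω, exp (t * X ω) ≤ 1 + t * X ω + t ^ 2 * (4 / a ^ 2 * D ω) := by
    intro ω
    have h0 := exp_le_poly (t * X ω)
    have habs : |t * X ω| = |t| * |X ω| := abs_mul _ _
    have h1 : (t * X ω) ^ 2 * exp |t * X ω|
        ≤ t ^ 2 * (4 / a ^ 2 * D ω) := by
      rw [habs, mul_pow]
      have h2 : X ω ^ 2 ≤ 4 / a ^ 2 * exp (a * |X ω|) := sq_le_exp_abs a (X ω) ha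
      have h3 : X ω ^ 2 * exp (|t| * |X ω|)
          ≤ (4 / a ^ 2 * exp (a * |X ω|)) * exp (|t| * |X ω|) :=
        mul_le_mul_of_nonneg_right h2 (exp_pos _).le
      have h4 : (4 / a ^ 2 * exp (a * |X ω|)) * exp (|t| * |X ω|)
          = 4 / a ^ 2 * exp ((a + |t|) * |X ω|) := by
        rw [mul_assoc, ← Real.exp_add]
        ring_nf
      have h5 : exp ((a + |t|) * |X ω|) ≤ D ω := by
        refine hdomabs ω (a + |t|) ?_
        rw [hadef] at *
        linarith
      calc t ^ 2 * X ω ^ 2 * exp (|t| * |X ω|)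
          = t ^ 2 * (X ω ^ 2 * exp (|t| * |X ω|)) := by ring
        _ ≤ t ^ 2 * (4 / a ^ 2 * exp ((a + |t|) * |X ω|)) := by
            refine mul_le_mul_of_nonneg_left ?_ (sq_nonneg t)
            rw [← h4]
            exact h3
        _ ≤ t ^ 2 * (4 / a ^ 2 * D ω) := by
            refine mul_le_mul_of_nonneg_left ?_ (sq_nonneg t)
            exact mul_le_mul_of_nonneg_left h5 (by positivity)
    linarith
  have h₁ : Integrable (fun ω => 1 + t * X ω) μ := by
    exact (integrable_const (1:ℝ)).add (hprodint.const_mul t)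
  have h₂ : Integrable (fun ω => t ^ 2 * (4 / a ^ 2 * D ω)) μ := by
    exact (hDint.const_mul (4 / a ^ 2)).const_mul (t ^ 2)
  have hRHSint : Integrable (fun ω => 1 + t * X ω + t ^ 2 * (4 / a ^ 2 * D ω)) μ := by
    exact h₁.add h₂
  have hle := integral_mono hint_t hRHSint hptwise
  have hDval : ∫ ω, D ω ∂μ = (A + B) / 2 := by
    rw [hDdef]
    rw [integral_div, integral_add hA hB]
  have hRHSval : ∫ ω, (1 + t * X ω + t ^ 2 * (4 / a ^ 2 * D ω)) ∂μ = 1 + K * t ^ 2 := by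
    rw [integral_add h₁ h₂,
      integral_add (integrable_const (1:ℝ)) (hprodint.const_mul t),
      integral_const, integral_const_mul, integral_const_mul, integral_const_mul]
    have hX0 : ∫ ω, X ω ∂μ = 0 := hzero
    rw [hX0, hDval]
    simp [hKdef]
    ring
  rw [hRHSval] at hle
  have hfinal : 1 + K * t ^ 2 ≤ exp (Real.sqrt (2 * K) ^ 2 * t ^ 2 / 2) := by
    rw [Real.sq_sqrt (by linarith : (0:ℝ) ≤ 2 * K)]
    have h1 : 2 * K * t ^ 2 / 2 = K * t ^ 2 := by ring
    rw [h1]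
    have := Real.add_one_le_exp (K * t ^ 2)
    linarith
  exact le_trans hle hfinal
end

section
/- Let Ψ be a p×p matrix satisfying the restricted eigenvalue condition: there is κ_RE(s) > 0 such that |Δ^T Ψ Δ| ≥ κ_RE(s)|Δ_J|_2² for all J with |J| ≤ s and all Δ ∈ C_J = {Δ : |Δ_{J^c}|_1 ≤ |Δ_J|_1}. Then the ℓ_1 sensitivity satisfies κ_1(s) := min_{|J|≤s} min_{Δ∈C_J, |Δ|_1=1} |ΨΔ|_∞ ≥ κ_RE(s)/(4s). -/
open Matrix

/-- the RE condition implies κ₁(s) ≥ κ_RE(s)/(4s)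
(lower-bound formulation of the sensitivity). -/
theorem re_implies_l1_sensitivity {p : ℕ} (Ψ : Matrix (Fin p) (Fin p) ℝ)
    (s : ℕ) (hs : 1 ≤ s) (κRE : ℝ) (hκRE : 0 < κRE)
    (hRE : ∀ J : Finset (Fin p), J.card ≤ s →
      ∀ Δ : Fin p → ℝ,
        (∑ j, if j ∈ J then 0 else |Δ j|) ≤ (∑ j, if j ∈ J then |Δ j| else 0) →
        κRE * (∑ j ∈ J, (Δ j) ^ 2) ≤ |Δ ⬝ᵥ Ψ.mulVec Δ|) :
    ∀ J : Finset (Fin p), J.card ≤ s →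
      ∀ Δ : Fin p → ℝ,
        (∑ j, if j ∈ J then 0 else |Δ j|) ≤ (∑ j, if j ∈ J then |Δ j| else 0) →
        (∑ j, |Δ j|) = 1 →
        κRE / (4 * s) ≤ ‖Ψ.mulVec Δ‖ := by
  intro J hJ Δ hcone h1
  have hp : 0 < p := by
    rcases Nat.eq_zero_or_pos p with h | h
    · exfalso; subst h; simp at h1
    · exact h
  haveI : Nonempty (Fin p) := ⟨⟨0, hp⟩⟩
  -- step 1: |Δ ⬝ᵥ ΨΔ| ≤ ‖ΨΔ‖
  have hstep1 : |Δ ⬝ᵥ Ψ.mulVec Δ| ≤ ‖Ψ.mulVec Δ‖ := by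
    calc |Δ ⬝ᵥ Ψ.mulVec Δ| ≤ ∑ j, |Δ j * Ψ.mulVec Δ j| := by
          exact Finset.abs_sum_le_sum_abs _ _
      _ ≤ ∑ j, |Δ j| * ‖Ψ.mulVec Δ‖ := by
          apply Finset.sum_le_sum
          intro j _
          rw [abs_mul]
          exact mul_le_mul_of_nonneg_left
            ((Real.norm_eq_abs _ ▸ norm_le_pi_norm (Ψ.mulVec Δ) j)) (abs_nonneg _)
      _ = ‖Ψ.mulVec Δ‖ := by rw [← Finset.sum_mul, h1, one_mul]
  -- step 2: split ℓ1 norm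
  have hsplit : (∑ j, |Δ j|) =
      (∑ j, if j ∈ J then |Δ j| else 0) + (∑ j, if j ∈ J then 0 else |Δ j|) := by
    rw [← Finset.sum_add_distrib]
    apply Finset.sum_congr rfl
    intro j _
    by_cases h : j ∈ J <;> simp [h]
  have hJsum : (1 : ℝ) ≤ 2 * ∑ j ∈ J, |Δ j| := by
    have : (∑ j, if j ∈ J then |Δ j| else 0) = ∑ j ∈ J, |Δ j| := by
      rw [Finset.sum_ite_mem, Finset.univ_inter]
    nlinarith [hsplit, hcone, h1]
  -- Cauchy-Schwarz: (∑_J |Δ|)² ≤ s * ∑_J Δ²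
  have hcs : (∑ j ∈ J, |Δ j|) ^ 2 ≤ (s : ℝ) * ∑ j ∈ J, (Δ j) ^ 2 := by
    have h := sq_sum_le_card_mul_sum_sq (s := J) (f := fun j => |Δ j|)
    have h2 : (∑ j ∈ J, |Δ j| ^ 2) = ∑ j ∈ J, (Δ j) ^ 2 := by
      apply Finset.sum_congr rfl; intro j _; exact sq_abs _
    have hcard : (J.card : ℝ) ≤ (s : ℝ) := by exact_mod_cast hJ
    have hnn : (0:ℝ) ≤ ∑ j ∈ J, (Δ j) ^ 2 := Finset.sum_nonneg fun j _ => sq_nonneg _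
    calc (∑ j ∈ J, |Δ j|) ^ 2 ≤ (J.card : ℝ) * ∑ j ∈ J, |Δ j| ^ 2 := by exact_mod_cast h
      _ = (J.card : ℝ) * ∑ j ∈ J, (Δ j) ^ 2 := by rw [h2]
      _ ≤ (s : ℝ) * ∑ j ∈ J, (Δ j) ^ 2 := mul_le_mul_of_nonneg_right hcard hnn
  have hs' : (0:ℝ) < (s:ℝ) := by exact_mod_cast hs
  have hlow : (1:ℝ) / (4 * s) ≤ ∑ j ∈ J, (Δ j) ^ 2 := by
    rw [div_le_iff₀ (by positivity)]
    nlinarith [hJsum, hcs]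
  have := hRE J hJ Δ hcone
  calc κRE / (4 * s) = κRE * (1 / (4 * s)) := by ring
    _ ≤ κRE * ∑ j ∈ J, (Δ j) ^ 2 := mul_le_mul_of_nonneg_left hlow hκRE.le
    _ ≤ |Δ ⬝ᵥ Ψ.mulVec Δ| := this
    _ ≤ ‖Ψ.mulVec Δ‖ := hstep1
end

section
/- Let X be an n×p matrix, θ*, θ̂ ∈ ℝ^p with |θ̂|_1 ≤ |θ*|_1, and suppose Δ = θ̂ - θ* satisfies |(1/n)X^T X Δ|_∞ ≤ ν for some ν ≥ 0. Then the prediction error satisfies (1/n)|XΔ|_2² ≤ 2ν|θ*|_1. -/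
open Matrix

/-- assumption-free prediction bound. -/
theorem prediction_bound {n p : ℕ} (X : Matrix (Fin n) (Fin p) ℝ)
    (θs θh : Fin p → ℝ) (ν : ℝ) (hν : 0 ≤ ν)
    (h1 : (∑ j, |θh j|) ≤ ∑ j, |θs j|)
    (hinf : ‖(1 / (n : ℝ)) • ((Xᵀ * X).mulVec (θh - θs))‖ ≤ ν) :
    (1 / (n : ℝ)) * ∑ i, (X.mulVec (θh - θs) i) ^ 2 ≤ 2 * ν * ∑ j, |θs j| := by
  set Δ : Fin p → ℝ := θh - θs with hΔ
  set M : Fin p → ℝ := (1 / (n : ℝ)) • ((Xᵀ * X).mulVec Δ) with hM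
  have key : ∑ i, (X.mulVec Δ i) ^ 2 = Δ ⬝ᵥ ((Xᵀ * X).mulVec Δ) := by
    rw [← mulVec_mulVec, mulVec_transpose, dotProduct_comm, ← dotProduct_mulVec]
    simp [dotProduct, sq]
  have hstep : (1 / (n : ℝ)) * ∑ i, (X.mulVec Δ i) ^ 2 = ∑ j, Δ j * M j := by
    rw [key]
    simp only [hM, dotProduct, Pi.smul_apply, smul_eq_mul, Finset.mul_sum]
    exact Finset.sum_congr rfl fun j _ => by ring
  have habs : ∀ j, |M j| ≤ ν := fun j => (norm_le_pi_norm M j).trans hinf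
  have hb : ∑ j, Δ j * M j ≤ ν * ∑ j, |Δ j| := by
    rw [Finset.mul_sum]
    refine Finset.sum_le_sum fun j _ => ?_
    calc Δ j * M j ≤ |Δ j * M j| := le_abs_self _
      _ = |Δ j| * |M j| := abs_mul _ _
      _ ≤ |Δ j| * ν := mul_le_mul_of_nonneg_left (habs j) (abs_nonneg _)
      _ = ν * |Δ j| := mul_comm _ _
  have hΔ1 : ∑ j, |Δ j| ≤ 2 * ∑ j, |θs j| := by
    calc ∑ j, |Δ j| ≤ ∑ j, (|θh j| + |θs j|) := by
          refine Finset.sum_le_sum fun j _ => ?_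
          simpa [hΔ] using abs_sub (θh j) (θs j)
      _ = (∑ j, |θh j|) + ∑ j, |θs j| := Finset.sum_add_distrib
      _ ≤ 2 * ∑ j, |θs j| := by linarith
  calc (1 / (n : ℝ)) * ∑ i, (X.mulVec Δ i) ^ 2 = ∑ j, Δ j * M j := hstep
    _ ≤ ν * ∑ j, |Δ j| := hb
    _ ≤ ν * (2 * ∑ j, |θs j|) := mul_le_mul_of_nonneg_left hΔ1 hν
    _ = 2 * ν * ∑ j, |θs j| := by ring
end

section
/- Let Ψ be a p×p matrix, θ* an s-sparse vector with support J, and θ̂ with |θ̂|_1 ≤ |θ*|_1. Suppose |ΨΔ|_∞ ≤ ν where Δ = θ̂ - θ*, and suppose the sensitivity κ_q(s) = min_{|J'|≤s} min_{Δ'∈C_{J'}, |Δ'|_q=1} |ΨΔ'|_∞ is positive. Then |θ̂ - θ*|_q ≤ ν/κ_q(s). -/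
open Matrix

/-- deterministic core of Theorem 1: |θ̂ - θ*|_q ≤ ν/κ_q(s). -/
theorem lq_estimation_bound {p : ℕ} (Ψ : Matrix (Fin p) (Fin p) ℝ)
    (s : ℕ) (θs θh : Fin p → ℝ)
    (hsparse : (Finset.univ.filter fun j => θs j ≠ 0).card ≤ s)
    (h1 : (∑ j, |θh j|) ≤ ∑ j, |θs j|)
    (q : ℝ) (hq : 1 ≤ q) (κ : ℝ) (hκ : 0 < κ)
    (hsens : ∀ J : Finset (Fin p), J.card ≤ s →
      ∀ Δ : Fin p → ℝ,
        (∑ j, if j ∈ J then 0 else |Δ j|) ≤ (∑ j, if j ∈ J then |Δ j| else 0) →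
        (∑ j, |Δ j| ^ q) ^ (1 / q) = 1 → κ ≤ ‖Ψ.mulVec Δ‖)
    (ν : ℝ) (hΨ : ‖Ψ.mulVec (θh - θs)‖ ≤ ν) :
    (∑ j, |θh j - θs j| ^ q) ^ (1 / q) ≤ ν / κ := by
  have hq0 : (0:ℝ) < q := lt_of_lt_of_le one_pos hq
  have hqne : q ≠ 0 := ne_of_gt hq0
  set Δ : Fin p → ℝ := θh - θs with hΔdef
  have hΔap : ∀ j, Δ j = θh j - θs j := fun j => rfl
  set J : Finset (Fin p) := Finset.univ.filter fun j => θs j ≠ 0 with hJdef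
  have hν0 : 0 ≤ ν := le_trans (norm_nonneg _) hΨ
  have hzero : ∀ j, j ∉ J → θs j = 0 := by
    intro j hj
    by_contra h
    exact hj (Finset.mem_filter.mpr ⟨Finset.mem_univ j, h⟩)
  -- cone condition
  have hcone : (∑ j, if j ∈ J then 0 else |Δ j|) ≤ (∑ j, if j ∈ J then |Δ j| else 0) := by
    have hA : ∀ j, (if j ∈ J then (0:ℝ) else |Δ j|)
        = |θh j| - (if j ∈ J then |θh j| else 0) := by
      intro j
      by_cases h : j ∈ J <;> simp [h, hΔap j, hzero j, sub_zero]
    calc (∑ j, if j ∈ J then (0:ℝ) else |Δ j|)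
        = ∑ j, (|θh j| - (if j ∈ J then |θh j| else 0)) :=
          Finset.sum_congr rfl (fun j _ => hA j)
      _ = (∑ j, |θh j|) - ∑ j, (if j ∈ J then |θh j| else 0) := Finset.sum_sub_distrib _ _
      _ ≤ (∑ j, |θs j|) - ∑ j, (if j ∈ J then |θh j| else 0) := sub_le_sub_right h1 _
      _ = ∑ j, ((if j ∈ J then |θs j| else 0) - (if j ∈ J then |θh j| else 0)) := by
          rw [Finset.sum_sub_distrib]
          congr 1
          exact Finset.sum_congr rfl (fun j _ => by
            by_cases h : j ∈ J <;> simp [h, hzero j])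
      _ ≤ ∑ j, (if j ∈ J then |Δ j| else 0) := by
          apply Finset.sum_le_sum
          intro j _
          by_cases h : j ∈ J
          · simp only [h, if_true]
            calc |θs j| - |θh j| ≤ |θs j - θh j| := abs_sub_abs_le_abs_sub _ _
              _ = |Δ j| := by rw [hΔap j, abs_sub_comm]
          · simp [h]
  have hJcard : J.card ≤ s := hsparse
  by_cases hΔ0 : Δ = 0
  · have hz : ∀ j, θh j - θs j = 0 := fun j => by
      have := congrFun hΔ0 j; simpa [hΔap j] using this
    have : (∑ j, |θh j - θs j| ^ q) = 0 := by
      apply Finset.sum_eq_zero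
      intro j _
      rw [hz j]
      simp [Real.zero_rpow hqne]
    rw [this, Real.zero_rpow (by positivity : 1 / q ≠ 0)]
    positivity
  · obtain ⟨j0, hj0⟩ : ∃ j, Δ j ≠ 0 := by
      by_contra h
      push_neg at h
      exact hΔ0 (funext h)
    set S : ℝ := ∑ j, |Δ j| ^ q with hSdef
    have hSpos : 0 < S := by
      apply Finset.sum_pos'
      · intro j _; positivity
      · exact ⟨j0, Finset.mem_univ j0, Real.rpow_pos_of_pos (abs_pos.mpr hj0) q⟩
    set t : ℝ := S ^ (1 / q) with htdef
    have htpos : 0 < t := Real.rpow_pos_of_pos hSpos _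
    -- apply sensitivity to t⁻¹ • Δ
    have hcone' : (∑ j, if j ∈ J then 0 else |(t⁻¹ • Δ) j|)
        ≤ (∑ j, if j ∈ J then |(t⁻¹ • Δ) j| else 0) := by
      have habs : ∀ j, |(t⁻¹ • Δ) j| = t⁻¹ * |Δ j| := by
        intro j
        simp [Pi.smul_apply, abs_mul, abs_of_pos (inv_pos.mpr htpos)]
      have e1 : (∑ j, if j ∈ J then (0:ℝ) else |(t⁻¹ • Δ) j|)
          = t⁻¹ * ∑ j, if j ∈ J then 0 else |Δ j| := by
        rw [Finset.mul_sum]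
        exact Finset.sum_congr rfl (fun j _ => by
          by_cases h : j ∈ J <;> simp [h, abs_mul, abs_of_pos (inv_pos.mpr htpos)])
      have e2 : (∑ j, if j ∈ J then |(t⁻¹ • Δ) j| else (0:ℝ))
          = t⁻¹ * ∑ j, if j ∈ J then |Δ j| else 0 := by
        rw [Finset.mul_sum]
        exact Finset.sum_congr rfl (fun j _ => by
          by_cases h : j ∈ J <;> simp [h, abs_mul, abs_of_pos (inv_pos.mpr htpos)])
      rw [e1, e2]
      exact mul_le_mul_of_nonneg_left hcone (le_of_lt (inv_pos.mpr htpos))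
    have hnorm1 : (∑ j, |(t⁻¹ • Δ) j| ^ q) ^ (1 / q) = 1 := by
      have habs : ∀ j, |(t⁻¹ • Δ) j| ^ q = t⁻¹ ^ q * |Δ j| ^ q := by
        intro j
        rw [show |(t⁻¹ • Δ) j| = t⁻¹ * |Δ j| by
          simp [Pi.smul_apply, abs_mul, abs_of_pos (inv_pos.mpr htpos)]]
        exact Real.mul_rpow (le_of_lt (inv_pos.mpr htpos)) (abs_nonneg _)
      rw [Finset.sum_congr rfl (fun j _ => habs j), ← Finset.mul_sum, ← hSdef,
        Real.mul_rpow (by positivity) (le_of_lt hSpos)]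
      rw [show ((t⁻¹ ^ q) ^ (1/q) : ℝ) = t⁻¹ by
        rw [← Real.rpow_mul (le_of_lt (inv_pos.mpr htpos)), mul_one_div_cancel hqne,
          Real.rpow_one]]
      rw [← htdef]
      exact inv_mul_cancel₀ (ne_of_gt htpos)
    have hκle : κ ≤ ‖Ψ.mulVec (t⁻¹ • Δ)‖ := hsens J hJcard _ hcone' hnorm1
    have hmv : Ψ.mulVec (t⁻¹ • Δ) = t⁻¹ • Ψ.mulVec Δ := by
      rw [Matrix.mulVec_smul]
    rw [hmv, norm_smul] at hκle
    have : κ ≤ t⁻¹ * ν := by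
      calc κ ≤ ‖t⁻¹‖ * ‖Ψ.mulVec Δ‖ := hκle
        _ = t⁻¹ * ‖Ψ.mulVec Δ‖ := by
            rw [Real.norm_eq_abs, abs_of_pos (inv_pos.mpr htpos)]
        _ ≤ t⁻¹ * ν := mul_le_mul_of_nonneg_left hΨ (le_of_lt (inv_pos.mpr htpos))
    have hgoal : t ≤ ν / κ := by
      rw [le_div_iff₀ hκ]
      calc t * κ ≤ t * (t⁻¹ * ν) := mul_le_mul_of_nonneg_left this (le_of_lt htpos)
        _ = ν := by field_simp
    calc (∑ j, |θh j - θs j| ^ q) ^ (1 / q)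
        = t := rfl
      _ ≤ ν / κ := hgoal
end

section
/- Let Ψ̂ be a p×p matrix, θ*, θ̂ ∈ ℝ^p with θ* s-sparse and |θ̂|_1 ≤ |θ*|_1, and let Δ = θ* - θ̂. Suppose |Ψ̂Δ|_∞ ≤ 2(μ|θ̂|_1 + τ) + μ|Δ|_1 for constants μ, τ ≥ 0, and let κ̂_1(s), κ̂_q(s) > 0 be the ℓ_1 and ℓ_q sensitivities of Ψ̂ relative to cones of order s, with μ < κ̂_1(s). Then |θ̂ - θ*|_q ≤ 2(μ|θ̂|_1 + τ) / (κ̂_q(s)(1 - μ/κ̂_1(s))). -/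
open Matrix

/-- deterministic core of Theorem 3 (confidence intervals via
empirical sensitivities). -/
theorem confidence_interval_bound {p : ℕ} (Ψ : Matrix (Fin p) (Fin p) ℝ)
    (s : ℕ) (θs θh : Fin p → ℝ)
    (hsparse : (Finset.univ.filter fun j => θs j ≠ 0).card ≤ s)
    (h1 : (∑ j, |θh j|) ≤ ∑ j, |θs j|)
    (μ τ : ℝ) (hμ : 0 ≤ μ) (hτ : 0 ≤ τ)
    (q : ℝ) (hq : 1 ≤ q) (κ1 κq : ℝ) (hκ1 : 0 < κ1) (hκq : 0 < κq)
    (hμκ : μ < κ1)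
    (hsens1 : ∀ J : Finset (Fin p), J.card ≤ s →
      ∀ Δ : Fin p → ℝ,
        (∑ j, if j ∈ J then 0 else |Δ j|) ≤ (∑ j, if j ∈ J then |Δ j| else 0) →
        (∑ j, |Δ j|) = 1 → κ1 ≤ ‖Ψ.mulVec Δ‖)
    (hsensq : ∀ J : Finset (Fin p), J.card ≤ s →
      ∀ Δ : Fin p → ℝ,
        (∑ j, if j ∈ J then 0 else |Δ j|) ≤ (∑ j, if j ∈ J then |Δ j| else 0) →
        (∑ j, |Δ j| ^ q) ^ (1 / q) = 1 → κq ≤ ‖Ψ.mulVec Δ‖)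
    (hΨ : ‖Ψ.mulVec (θs - θh)‖
        ≤ 2 * (μ * (∑ j, |θh j|) + τ) + μ * ∑ j, |θs j - θh j|) :
    (∑ j, |θh j - θs j| ^ q) ^ (1 / q)
      ≤ 2 * (μ * (∑ j, |θh j|) + τ) / (κq * (1 - μ / κ1)) := by
  classical
  set J : Finset (Fin p) := Finset.univ.filter fun j => θs j ≠ 0 with hJ
  set Δ : Fin p → ℝ := θs - θh with hΔ
  have hΔj : ∀ j, Δ j = θs j - θh j := fun j => rfl
  have hq0 : q ≠ 0 := by linarith
  set A : ℝ := μ * (∑ j, |θh j|) + τ with hA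
  have hA0 : 0 ≤ A := by positivity
  have hc : 0 < κ1 - μ := by linarith
  have hden : 0 < κq * (1 - μ / κ1) := by
    have : μ / κ1 < 1 := (div_lt_one hκ1).2 hμκ
    have : 0 < 1 - μ / κ1 := by linarith
    positivity
  -- cone condition
  have hcone : (∑ j, if j ∈ J then 0 else |Δ j|) ≤ (∑ j, if j ∈ J then |Δ j| else 0) := by
    have e1 : (∑ j, if j ∈ J then 0 else |Δ j|)
        = (∑ j, |θh j|) - ∑ j, (if j ∈ J then |θh j| else 0) := by
      rw [← Finset.sum_sub_distrib]
      refine Finset.sum_congr rfl fun j _ => ?_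
      by_cases h : j ∈ J
      · simp [h]
      · have hz : θs j = 0 := by simpa [hJ] using h
        simp [h, hΔj, hz]
    have e2 : (∑ j, |θs j|) = ∑ j, (if j ∈ J then |θs j| else 0) := by
      refine Finset.sum_congr rfl fun j _ => ?_
      by_cases h : j ∈ J
      · simp [h]
      · have hz : θs j = 0 := by simpa [hJ] using h
        simp [h, hz]
    have e3 : (∑ j, (if j ∈ J then |θs j| else 0)) - (∑ j, (if j ∈ J then |θh j| else 0))
        ≤ ∑ j, if j ∈ J then |Δ j| else 0 := by
      rw [← Finset.sum_sub_distrib]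
      refine Finset.sum_le_sum fun j _ => ?_
      by_cases h : j ∈ J
      · simp only [h, if_true]
        have := abs_sub_abs_le_abs_sub (θs j) (θh j)
        rw [hΔj]; linarith
      · simp [h]
    calc (∑ j, if j ∈ J then 0 else |Δ j|)
        = (∑ j, |θh j|) - ∑ j, (if j ∈ J then |θh j| else 0) := e1
      _ ≤ (∑ j, |θs j|) - ∑ j, (if j ∈ J then |θh j| else 0) := by linarith
      _ ≤ ∑ j, if j ∈ J then |Δ j| else 0 := by rw [e2]; exact e3
  have hJcard : J.card ≤ s := hsparse
  set t : ℝ := ∑ j, |Δ j| with ht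
  have ht0 : 0 ≤ t := Finset.sum_nonneg fun j _ => abs_nonneg _
  have hΨ' : ‖Ψ.mulVec Δ‖ ≤ 2 * A + μ * t := by
    have : (∑ j, |θs j - θh j|) = t := by
      rw [ht]; exact Finset.sum_congr rfl fun j _ => by rw [hΔj]
    rw [hΔ, hA]; rw [this] at hΨ; exact hΨ
  -- ℓ1 bound: t*(κ1-μ) ≤ 2A
  have htbound : t * (κ1 - μ) ≤ 2 * A := by
    rcases eq_or_lt_of_le ht0 with h0 | h0
    · nlinarith
    · have key : κ1 * t ≤ ‖Ψ.mulVec Δ‖ := by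
        have hcone' : (∑ j, if j ∈ J then 0 else |(t⁻¹ • Δ) j|)
            ≤ (∑ j, if j ∈ J then |(t⁻¹ • Δ) j| else 0) := by
          have hscale : ∀ j, |(t⁻¹ • Δ) j| = t⁻¹ * |Δ j| := fun j => by
            simp [abs_mul, abs_of_nonneg (inv_nonneg.2 ht0)]
          simp only [hscale]
          rw [show (∑ j, if j ∈ J then (0:ℝ) else t⁻¹ * |Δ j|)
              = t⁻¹ * ∑ j, if j ∈ J then 0 else |Δ j| by
            rw [Finset.mul_sum]; exact Finset.sum_congr rfl fun j _ => by
              by_cases h : j ∈ J <;> simp [h]]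
          rw [show (∑ j, if j ∈ J then t⁻¹ * |Δ j| else (0:ℝ))
              = t⁻¹ * ∑ j, if j ∈ J then |Δ j| else 0 by
            rw [Finset.mul_sum]; exact Finset.sum_congr rfl fun j _ => by
              by_cases h : j ∈ J <;> simp [h]]
          exact mul_le_mul_of_nonneg_left hcone (inv_nonneg.2 ht0)
        have hnorm1 : (∑ j, |(t⁻¹ • Δ) j|) = 1 := by
          have hscale : ∀ j, |(t⁻¹ • Δ) j| = t⁻¹ * |Δ j| := fun j => by
            simp [abs_mul, abs_of_nonneg (inv_nonneg.2 ht0)]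
          simp only [hscale, ← Finset.mul_sum, ← ht]
          exact inv_mul_cancel₀ (ne_of_gt h0)
        have := hsens1 J hJcard (t⁻¹ • Δ) hcone' hnorm1
        rw [Matrix.mulVec_smul, norm_smul, Real.norm_eq_abs,
          abs_of_nonneg (inv_nonneg.2 ht0)] at this
        calc κ1 * t ≤ (t⁻¹ * ‖Ψ.mulVec Δ‖) * t := by
              exact mul_le_mul_of_nonneg_right this ht0
          _ = ‖Ψ.mulVec Δ‖ := by field_simp
      nlinarith
  -- rewrite goal LHS
  have hLHS : (∑ j, |θh j - θs j| ^ q) = ∑ j, |Δ j| ^ q := by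
    refine Finset.sum_congr rfl fun j _ => ?_
    rw [hΔj, abs_sub_comm]
  rw [hLHS]
  set S : ℝ := ∑ j, |Δ j| ^ q with hS
  have hS0 : 0 ≤ S := Finset.sum_nonneg fun j _ => Real.rpow_nonneg (abs_nonneg _) _
  set r : ℝ := S ^ (1/q) with hr
  have hr0 : 0 ≤ r := Real.rpow_nonneg hS0 _
  rcases eq_or_lt_of_le hr0 with h0 | h0
  · rw [← h0] at *
    exact div_nonneg (by positivity) (le_of_lt hden)
  · have key : κq * r ≤ ‖Ψ.mulVec Δ‖ := by
      have hri : (0:ℝ) ≤ r⁻¹ := inv_nonneg.2 hr0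
      have hscale : ∀ j, |(r⁻¹ • Δ) j| = r⁻¹ * |Δ j| := fun j => by
        simp [abs_mul, abs_of_nonneg hri]
      have hcone' : (∑ j, if j ∈ J then 0 else |(r⁻¹ • Δ) j|)
          ≤ (∑ j, if j ∈ J then |(r⁻¹ • Δ) j| else 0) := by
        simp only [hscale]
        rw [show (∑ j, if j ∈ J then (0:ℝ) else r⁻¹ * |Δ j|)
            = r⁻¹ * ∑ j, if j ∈ J then 0 else |Δ j| by
          rw [Finset.mul_sum]; exact Finset.sum_congr rfl fun j _ => by
            by_cases h : j ∈ J <;> simp [h]]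
        rw [show (∑ j, if j ∈ J then r⁻¹ * |Δ j| else (0:ℝ))
            = r⁻¹ * ∑ j, if j ∈ J then |Δ j| else 0 by
          rw [Finset.mul_sum]; exact Finset.sum_congr rfl fun j _ => by
            by_cases h : j ∈ J <;> simp [h]]
        exact mul_le_mul_of_nonneg_left hcone hri
      have hnormq : (∑ j, |(r⁻¹ • Δ) j| ^ q) ^ (1/q) = 1 := by
        have e : (∑ j, |(r⁻¹ • Δ) j| ^ q) = (r⁻¹) ^ q * S := by
          rw [Finset.mul_sum]
          exact Finset.sum_congr rfl fun j _ => by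
            rw [hscale, Real.mul_rpow hri (abs_nonneg _)]
        rw [e, Real.mul_rpow (Real.rpow_nonneg hri _) hS0,
          ← Real.rpow_mul hri, mul_one_div_cancel hq0, Real.rpow_one, ← hr,
          inv_mul_cancel₀ (ne_of_gt h0)]
      have := hsensq J hJcard (r⁻¹ • Δ) hcone' hnormq
      rw [Matrix.mulVec_smul, norm_smul, Real.norm_eq_abs, abs_of_nonneg hri] at this
      calc κq * r ≤ (r⁻¹ * ‖Ψ.mulVec Δ‖) * r := mul_le_mul_of_nonneg_right this hr0
        _ = ‖Ψ.mulVec Δ‖ := by field_simp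
    rw [le_div_iff₀ hden]
    have hq1 : κq * r ≤ 2 * A + μ * t := le_trans key hΨ'
    have hfin : r * κq * (κ1 - μ) ≤ 2 * A * κ1 := by
      nlinarith [mul_le_mul_of_nonneg_right hq1 (le_of_lt hc),
        mul_le_mul_of_nonneg_left htbound hμ]
    have hrw : r * (κq * (1 - μ / κ1)) = (r * κq * (κ1 - μ)) / κ1 := by
      field_simp
    rw [hrw]
    rw [div_le_iff₀ hκ1]
    linarith
end
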